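/- For any wheel graph W_n with n ≥ 4, the outer-independent total Roman domination number equals ⌈(n−1)/2⌉ + 2, i.e., γ_oitR(W_n) = ⌈(n−1)/2⌉ + 2. -/

import Mathlib

namespace OITRPaper

variable {V : Type*}

/-- `S` is a vertex cover of `G`: every edge of `G` is incident to a vertex of `S`. -/
def IsVertexCover (G : SimpleGraph V) (S : Set V) : Prop :=
  ∀ ⦃u v : V⦄, G.Adj u v → u ∈ S ∨ v ∈ S

/-- `S` is an independent set of `G`: no two vertices of `S` are adjacent. -/
def IsIndepSet (G : SimpleGraph V) (S : Set V) : Prop :=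
  ∀ ⦃u : V⦄, u ∈ S → ∀ ⦃v : V⦄, v ∈ S → ¬ G.Adj u v

/-- `S` is a dominating set of `G`. -/
def IsDomSet (G : SimpleGraph V) (S : Set V) : Prop :=
  ∀ v : V, v ∉ S → ∃ u ∈ S, G.Adj v u

/-- `S` is a total dominating set of `G`: every vertex has a neighbor in `S`. -/
def IsTotalDomSet (G : SimpleGraph V) (S : Set V) : Prop :=
  ∀ v : V, ∃ u ∈ S, G.Adj v u

/-- `G` is claw-free: it contains no induced `K_{1,3}`. -/
def ClawFree (G : SimpleGraph V) : Prop :=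
  ∀ c a b d : V, G.Adj c a → G.Adj c b → G.Adj c d →
    a ≠ b → a ≠ d → b ≠ d → G.Adj a b ∨ G.Adj a d ∨ G.Adj b d

/-- `f` is a Roman dominating function on `G`. -/
def IsRDF (G : SimpleGraph V) (f : V → ℕ) : Prop :=
  (∀ v, f v ≤ 2) ∧ ∀ v, f v = 0 → ∃ u, G.Adj v u ∧ f u = 2

/-- `f` is an outer-independent Roman dominating function on `G`. -/
def IsOIRDF (G : SimpleGraph V) (f : V → ℕ) : Prop :=
  IsRDF G f ∧ IsIndepSet G {v | f v = 0}

/-- `f` is an outer-independent total Roman dominating function on `G`. -/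
def IsOITRDF (G : SimpleGraph V) (f : V → ℕ) : Prop :=
  IsOIRDF G f ∧ ∀ v, 1 ≤ f v → ∃ u, G.Adj v u ∧ 1 ≤ f u

variable [Fintype V]

/-- The vertex cover number `α(G)`. -/
noncomputable def vertexCoverNum (G : SimpleGraph V) : ℕ :=
  sInf {m | ∃ S : Set V, IsVertexCover G S ∧ S.ncard = m}

/-- The independence number `β(G)`. -/
noncomputable def indepNum (G : SimpleGraph V) : ℕ :=
  sSup {m | ∃ S : Set V, IsIndepSet G S ∧ S.ncard = m}

/-- The domination number `γ(G)`. -/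
noncomputable def domNum (G : SimpleGraph V) : ℕ :=
  sInf {m | ∃ S : Set V, IsDomSet G S ∧ S.ncard = m}

/-- The total domination number `γ_t(G)`. -/
noncomputable def totalDomNum (G : SimpleGraph V) : ℕ :=
  sInf {m | ∃ S : Set V, IsTotalDomSet G S ∧ S.ncard = m}

/-- The outer-independent total domination number `γ_{t,oi}(G)`. -/
noncomputable def oiTotalDomNum (G : SimpleGraph V) : ℕ :=
  sInf {m | ∃ S : Set V, IsTotalDomSet G S ∧ IsIndepSet G Sᶜ ∧ S.ncard = m}

/-- The Roman domination number `γ_R(G)`. -/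
noncomputable def romanDomNum (G : SimpleGraph V) : ℕ :=
  sInf {w | ∃ f : V → ℕ, IsRDF G f ∧ ∑ v, f v = w}

/-- The outer-independent Roman domination number `γ_{oiR}(G)`. -/
noncomputable def oiRomanDomNum (G : SimpleGraph V) : ℕ :=
  sInf {w | ∃ f : V → ℕ, IsOIRDF G f ∧ ∑ v, f v = w}

/-- The outer-independent total Roman domination number `γ_{oitR}(G)`. -/
noncomputable def oitRomanDomNum (G : SimpleGraph V) : ℕ :=
  sInf {w | ∃ f : V → ℕ, IsOITRDF G f ∧ ∑ v, f v = w}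


/-- The circulant graph `C(n,k)` on vertex set `ℤ/nℤ` (modelled as `Fin n`):
distinct vertices `i, j` are adjacent iff `j ≡ i + t (mod n)` or `i ≡ j + t (mod n)`
for some `t ∈ {1, …, k}`. -/
def circulant (n k : ℕ) : SimpleGraph (Fin n) where
  Adj i j := i ≠ j ∧ ∃ t : ℕ, 1 ≤ t ∧ t ≤ k ∧
      ((i.val + t) % n = j.val ∨ (j.val + t) % n = i.val)
  symm := by
    constructor
    rintro i j ⟨hij, t, h1, h2, h⟩
    exact ⟨hij.symm, t, h1, h2, h.symm⟩
  loopless := ⟨fun i h => h.1 rfl⟩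

/-- The wheel graph `W_n` of order `n`: a universal hub vertex (`none`) joined to all
vertices of a cycle of order `n - 1`. -/
def wheel (n : ℕ) : SimpleGraph (Option (Fin (n - 1))) where
  Adj x y :=
    match x, y with
    | none, none => False
    | none, some _ => True
    | some _, none => True
    | some i, some j => i ≠ j ∧
        ((i.val + 1) % (n - 1) = j.val ∨ (j.val + 1) % (n - 1) = i.val)
  symm := by
    constructor
    rintro (_ | i) (_ | j) h <;> simp_all
    exact ⟨Ne.symm h.1, h.2.symm⟩
  loopless := by
    constructor
    rintro (_ | i) h <;> simp_all

/-- The direct (tensor) product of two simple graphs. -/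
def directProd {α β : Type*} (G : SimpleGraph α) (H : SimpleGraph β) :
    SimpleGraph (α × β) where
  Adj x y := G.Adj x.1 y.1 ∧ H.Adj x.2 y.2
  symm := ⟨fun _ _ ⟨h1, h2⟩ => ⟨h1.symm, h2.symm⟩⟩
  loopless := ⟨fun x h => G.irrefl h.1⟩


lemma wheel_adj_none_some (n : ℕ) (i : Fin (n-1)) : (wheel n).Adj none (some i) := trivial

lemma wheel_adj_some_none (n : ℕ) (i : Fin (n-1)) : (wheel n).Adj (some i) none := trivial

lemma wheel_adj_some_some (n : ℕ) (i j : Fin (n-1)) :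
    (wheel n).Adj (some i) (some j) ↔
      i ≠ j ∧ ((i.val+1)%(n-1) = j.val ∨ (j.val+1)%(n-1) = i.val) := Iff.rfl

lemma wheel_not_adj_none_none (n : ℕ) :
    ¬ (wheel n).Adj (none : Option (Fin (n-1))) none := id

lemma card_le_sum_nat {α : Type*} (s : Finset α) (g : α → ℕ)
    (h : ∀ i ∈ s, 1 ≤ g i) : s.card ≤ ∑ i ∈ s, g i := by
  calc s.card = ∑ _i ∈ s, 1 := by simp
  _ ≤ ∑ i ∈ s, g i := Finset.sum_le_sum h

lemma sum_ite_even (m : ℕ) :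
    (∑ i : Fin m, (if i.val % 2 = 0 then 1 else 0)) = (m+1)/2 := by
  induction m with
  | zero => simp
  | succ k ih =>
    rw [Fin.sum_univ_castSucc]
    simp only [Fin.coe_castSucc, Fin.val_last]
    rw [ih]
    have h := Nat.mod_two_eq_zero_or_one k
    split_ifs with h' <;> omega

lemma mod_succ_cases (m x : ℕ) (hx : x < m) :
    (x+1) % m = x+1 ∨ ((x+1) % m = 0 ∧ x + 1 = m) := by
  rcases Nat.lt_or_ge (x+1) m with h|h
  · exact Or.inl (Nat.mod_eq_of_lt h)
  · have hxm : x + 1 = m := by omega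
    right
    rw [hxm, Nat.mod_self]
    exact ⟨rfl, rfl⟩

lemma upper_mem (n : ℕ) (hn : 4 ≤ n) :
    ∃ f : Option (Fin (n-1)) → ℕ, IsOITRDF (wheel n) f ∧ ∑ v, f v = (n-1+1)/2 + 2 := by
  classical
  have hm3 : 3 ≤ n - 1 := by omega
  refine ⟨fun x => Option.elim x 2 (fun i => if i.val % 2 = 0 then 1 else 0),
    ⟨⟨⟨?_, ?_⟩, ?_⟩, ?_⟩, ?_⟩
  · rintro (_ | i)
    · exact le_refl 2
    · simp only [Option.elim]; split_ifs <;> omega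
  · rintro (_ | i) hv
    · simp at hv
    · exact ⟨none, wheel_adj_some_none n i, rfl⟩
  · rintro (_ | i) hi (_ | j) hj hadj
    · exact wheel_not_adj_none_none n hadj
    · simp at hi
    · simp at hj
    · simp only [Option.elim, Set.mem_setOf_eq, ite_eq_right_iff] at hi hj
      have hi' : i.val % 2 = 1 := by
        have h := Nat.mod_two_eq_zero_or_one i.val
        rcases h with h|h
        · exact absurd (hi h) one_ne_zero
        · exact h
      have hj' : j.val % 2 = 1 := by
        have h := Nat.mod_two_eq_zero_or_one j.val
        rcases h with h|h
        · exact absurd (hj h) one_ne_zero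
        · exact h
      rw [wheel_adj_some_some] at hadj
      obtain ⟨hne, h|h⟩ := hadj
      · rcases mod_succ_cases (n-1) i.val i.isLt with h'|⟨h', h''⟩ <;>
          rw [h'] at h <;> omega
      · rcases mod_succ_cases (n-1) j.val j.isLt with h'|⟨h', h''⟩ <;>
          rw [h'] at h <;> omega
  · rintro (_ | i) _
    · refine ⟨some ⟨0, by omega⟩, wheel_adj_none_some n _, ?_⟩
      norm_num
    · exact ⟨none, wheel_adj_some_none n i, by norm_num⟩
  · rw [Fintype.sum_option]
    simp only [Option.elim]
    rw [sum_ite_even]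
    omega

lemma lower_bound (n : ℕ) (hn : 4 ≤ n) (f : Option (Fin (n-1)) → ℕ)
    (hf : IsOITRDF (wheel n) f) : (n - 1 + 1)/2 + 2 ≤ ∑ v, f v := by
  classical
  have hm3 : 3 ≤ n - 1 := by omega
  obtain ⟨⟨⟨hle, hdom⟩, hind⟩, _htot⟩ := hf
  set A : Finset (Fin (n-1)) := Finset.univ.filter (fun i => ¬ f (some i) = 0) with hA
  set B : Finset (Fin (n-1)) := Finset.univ.filter (fun i => f (some i) = 0) with hB
  have hcardAB : B.card + A.card = n - 1 := by
    rw [hB, hA,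
      Finset.card_filter_add_card_filter_not (p := fun i => f (some i) = 0)]
    simp
  have hmpos : 0 < n - 1 := by omega
  set g : Fin (n-1) → Fin (n-1) := fun i => ⟨(i.val+1)%(n-1), Nat.mod_lt _ hmpos⟩ with hg
  have hBA : B.card ≤ A.card := by
    apply Finset.card_le_card_of_injOn g
    · intro i hi
      rw [hB, Finset.mem_coe, Finset.mem_filter] at hi
      rw [hA, Finset.mem_coe, Finset.mem_filter]
      refine ⟨Finset.mem_univ _, fun h0 => ?_⟩
      have hne : i ≠ g i := by
        intro heq
        have hv : i.val = (i.val+1)%(n-1) := congrArg Fin.val heq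
        rcases mod_succ_cases (n-1) i.val i.isLt with h'|⟨h', h''⟩ <;>
          rw [h'] at hv <;> omega
      have hadj : (wheel n).Adj (some i) (some (g i)) := ⟨hne, Or.inl rfl⟩
      exact hind (Set.mem_setOf_eq ▸ hi.2) (Set.mem_setOf_eq ▸ h0) hadj
    · intro i _ j _ hij
      have h1 : (i.val+1)%(n-1) = (j.val+1)%(n-1) := congrArg Fin.val hij
      have hil := i.isLt
      have hjl := j.isLt
      rcases mod_succ_cases (n-1) i.val i.isLt with h'|⟨h', h''⟩ <;>
        rcases mod_succ_cases (n-1) j.val j.isLt with h3|⟨h3, h4⟩ <;>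
        rw [h', h3] at h1 <;> (apply Fin.ext; omega)
  have hApos : ∀ i ∈ A, 1 ≤ f (some i) := by
    intro i hi
    rw [hA, Finset.mem_filter] at hi
    omega
  have hcyc : A.card ≤ ∑ i : Fin (n-1), f (some i) :=
    le_trans (card_le_sum_nat A _ hApos)
      (Finset.sum_le_sum_of_subset (Finset.subset_univ A))
  have htotal : ∑ v, f v = f none + ∑ i : Fin (n-1), f (some i) := Fintype.sum_option f
  rcases Nat.lt_or_ge (f none) 2 with hfn | hfn
  swap
  · omega
  rcases Nat.lt_or_ge (f none) 1 with hfn0 | hfn1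
  · -- f none = 0
    have h0 : f none = 0 := by omega
    obtain ⟨u, huadj, hu2⟩ := hdom none h0
    have hall : ∀ i : Fin (n-1), 1 ≤ f (some i) := by
      intro i
      by_contra hc
      have hc' : f (some i) = 0 := by omega
      exact hind (Set.mem_setOf_eq ▸ h0) (Set.mem_setOf_eq ▸ hc')
        (wheel_adj_none_some n i)
    match u, huadj, hu2 with
    | none, huadj, _ => exact absurd huadj (wheel_not_adj_none_none n)
    | some i₀, _, hu2 =>
      have hsplit : f (some i₀) + ∑ i ∈ Finset.univ.erase i₀, f (some i)
          = ∑ i : Fin (n-1), f (some i) :=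
        Finset.add_sum_erase _ (fun i => f (some i)) (Finset.mem_univ i₀)
      have herase : (Finset.univ.erase i₀).card ≤ ∑ i ∈ Finset.univ.erase i₀, f (some i) :=
        card_le_sum_nat _ _ (fun i _ => hall i)
      have hcard : (Finset.univ.erase i₀).card = n - 1 - 1 := by
        rw [Finset.card_erase_of_mem (Finset.mem_univ i₀)]
        simp
      omega
  · -- f none = 1
    have h1 : f none = 1 := by omega
    by_cases h2 : ∃ i₀ : Fin (n-1), f (some i₀) = 2
    · obtain ⟨i₀, hi₀⟩ := h2
      have hi₀A : i₀ ∈ A := by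
        rw [hA, Finset.mem_filter]
        exact ⟨Finset.mem_univ _, by omega⟩
      have hsplit : f (some i₀) + ∑ i ∈ A.erase i₀, f (some i) = ∑ i ∈ A, f (some i) :=
        Finset.add_sum_erase _ (fun i => f (some i)) hi₀A
      have herase : (A.erase i₀).card ≤ ∑ i ∈ A.erase i₀, f (some i) :=
        card_le_sum_nat _ _ (fun i hi => hApos i (Finset.mem_of_mem_erase hi))
      have hcarde : (A.erase i₀).card = A.card - 1 := Finset.card_erase_of_mem hi₀A
      have hAle : ∑ i ∈ A, f (some i) ≤ ∑ i : Fin (n-1), f (some i) :=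
        Finset.sum_le_sum_of_subset (Finset.subset_univ A)
      have hApos' : 1 ≤ A.card := Finset.card_pos.mpr ⟨i₀, hi₀A⟩
      omega
    · have hall : ∀ v : Option (Fin (n-1)), 1 ≤ f v := by
        intro v
        by_contra hc
        have hc' : f v = 0 := by omega
        obtain ⟨u, _, hu2⟩ := hdom v hc'
        match u, hu2 with
        | none, hu2 => omega
        | some i, hu2 => exact h2 ⟨i, hu2⟩
      have hcu : (Finset.univ : Finset (Option (Fin (n-1)))).card ≤ ∑ v, f v :=
        card_le_sum_nat _ _ (fun v _ => hall v)
      have hcu' : (Finset.univ : Finset (Option (Fin (n-1)))).card = n - 1 + 1 := by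
        simp
      omega

/-- `γ_oitR(W_n) = ⌈(n-1)/2⌉ + 2` for the wheel graph of order `n ≥ 4`. -/
theorem stmt16 (n : ℕ) (hn : 4 ≤ n) :
    oitRomanDomNum (wheel n) = (n - 1) ⌈/⌉ 2 + 2 := by
  have hceil : (n-1) ⌈/⌉ 2 = (n-1+1)/2 := by
    rw [Nat.ceilDiv_eq_add_pred_div]; omega
  rw [hceil]
  obtain ⟨f0, hf0, hsum0⟩ := upper_mem n hn
  unfold oitRomanDomNum
  apply le_antisymm
  · exact Nat.sInf_le ⟨f0, hf0, hsum0⟩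
  · have hmem : (∑ v, f0 v) ∈ {w | ∃ f : Option (Fin (n-1)) → ℕ,
        IsOITRDF (wheel n) f ∧ ∑ v, f v = w} := ⟨f0, hf0, rfl⟩
    refine le_csInf ⟨_, hmem⟩ ?_
    rintro w ⟨f, hf, rfl⟩
    exact lower_bound n hn f hf


end OITRPaper
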